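/- Let G = ⟨X⟩ be a δ-hyperbolic group and let V ∈ X* be a cyclically minimal word with ‖V‖ ≥ 180δ. Then for every k ∈ ℤ, the word V^k is a (4, 2520δ)-quasi-geodesic word in the Cayley graph Γ(G,X). -/

import Mathlib

/-- The evaluation in `G` of a word over the alphabet `X`, via `f : X → G`. -/
def evalWord {G : Type*} [Group G] {X : Type*} (f : X → G) (w : List X) : G :=
  (w.map f).prod

/-- The word length of a group element with respect to the generators `f : X → G`. -/
noncomputable def wordLength {G : Type*} [Group G] {X : Type*} (f : X → G) (g : G) : ℕ :=
  sInf {n : ℕ | ∃ w : List X, w.length = n ∧ evalWord f w = g}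

/-- `u` is a (contiguous) subword of `w`. -/
def IsSubword {X : Type*} (u w : List X) : Prop :=
  ∃ v₁ v₂ : List X, w = v₁ ++ u ++ v₂

/-- The word `w` is `(lam, c)`-quasi-geodesic in the Cayley graph `Γ(G, X)`: every
subword `u` of `w` satisfies `‖u‖ ≤ lam * |u|_G + c`. -/
def IsQGWord {G : Type*} [Group G] {X : Type*} (f : X → G) (lam c : ℝ) (w : List X) : Prop :=
  ∀ u : List X, IsSubword u w →
    (u.length : ℝ) ≤ lam * (wordLength f (evalWord f u) : ℝ) + c

/-- The `k`-th power of a word, for `k : ℕ`. -/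
def wordNPow {X : Type*} (w : List X) : ℕ → List X
  | 0 => []
  | n + 1 => w ++ wordNPow w n

/-- The `k`-th power of a word, for `k : ℤ`, using the letter-inversion map `inv`. -/
def wordZPow {X : Type*} (inv : X → X) (w : List X) : ℤ → List X
  | Int.ofNat n => wordNPow w n
  | Int.negSucc n => wordNPow (w.reverse.map inv) (n + 1)

/-- `w` is a cyclically minimal word: its length is minimal among all words representing
elements of `G` conjugate to the element represented by `w`. -/
def CyclicallyMinimal {G : Type*} [Group G] {X : Type*} (f : X → G) (w : List X) : Prop :=
  ∀ h : G, w.length ≤ wordLength f (h * evalWord f w * h⁻¹)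

/-- The Cayley graph of `G` with respect to the generators `f : X → G`. -/
def cayley {G : Type*} [Group G] {X : Type*} (f : X → G) : SimpleGraph G where
  Adj g h := g ≠ h ∧ ∃ x : X, g * f x = h ∨ h * f x = g
  symm := by constructor; rintro g h ⟨hne, x, hx⟩; exact ⟨hne.symm, x, hx.symm⟩
  loopless := by constructor; rintro g ⟨hne, -⟩; exact hne rfl

/-- All geodesic triangles of the graph `Γ` are `δ`-slim: every vertex of any side is
within distance `δ` of the union of the other two sides. -/
def SlimTriangles {V : Type*} (Γ : SimpleGraph V) (δ : ℕ) : Prop :=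
  ∀ (a b c : V) (p : Γ.Walk a b) (q : Γ.Walk b c) (r : Γ.Walk a c),
    p.length = Γ.dist a b → q.length = Γ.dist b c → r.length = Γ.dist a c →
    ∀ u ∈ p.support, ∃ v, (v ∈ q.support ∨ v ∈ r.support) ∧ Γ.dist u v ≤ δ


namespace QG3

variable {G : Type*} [Group G] {X : Type*} {f : X → G}

lemma evalWord_nil : evalWord f [] = 1 := rfl

lemma evalWord_cons (x : X) (w : List X) : evalWord f (x :: w) = f x * evalWord f w := by
  simp [evalWord]

lemma evalWord_append (a b : List X) :
    evalWord f (a ++ b) = evalWord f a * evalWord f b := by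
  simp [evalWord]

lemma wordLength_le (w : List X) : wordLength f (evalWord f w) ≤ w.length :=
  Nat.sInf_le ⟨w, rfl, rfl⟩

section gen

variable (hgen : ∀ g : G, ∃ w : List X, evalWord f w = g)
include hgen

lemma exists_geodesic_word (g : G) :
    ∃ w : List X, evalWord f w = g ∧ w.length = wordLength f g := by
  have hne : {n : ℕ | ∃ w : List X, w.length = n ∧ evalWord f w = g}.Nonempty := by
    obtain ⟨w, hw⟩ := hgen g
    exact ⟨w.length, w, rfl, hw⟩
  obtain ⟨w, hw1, hw2⟩ := Nat.sInf_mem hne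
  exact ⟨w, hw2, hw1⟩

lemma wordLength_mul_le (g h : G) :
    wordLength f (g * h) ≤ wordLength f g + wordLength f h := by
  obtain ⟨w1, hw1, hl1⟩ := exists_geodesic_word hgen g
  obtain ⟨w2, hw2, hl2⟩ := exists_geodesic_word hgen h
  have : evalWord f (w1 ++ w2) = g * h := by rw [evalWord_append, hw1, hw2]
  calc wordLength f (g * h) = wordLength f (evalWord f (w1 ++ w2)) := by rw [this]
    _ ≤ (w1 ++ w2).length := wordLength_le _
    _ = wordLength f g + wordLength f h := by rw [List.length_append, hl1, hl2]

end gen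

section inv

variable {inv : X → X} (hinv : ∀ x : X, f (inv x) = (f x)⁻¹)
include hinv

lemma evalWord_revInv (w : List X) :
    evalWord f (w.reverse.map inv) = (evalWord f w)⁻¹ := by
  induction w with
  | nil => simp [evalWord]
  | cons x t ih =>
    rw [List.reverse_cons, List.map_append, evalWord_append, ih, evalWord_cons]
    simp [evalWord, hinv, mul_inv_rev]

lemma wordLength_inv_le (hgen : ∀ g : G, ∃ w : List X, evalWord f w = g) (g : G) :
    wordLength f g⁻¹ ≤ wordLength f g := by
  obtain ⟨w, hw, hl⟩ := exists_geodesic_word hgen g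
  have : evalWord f (w.reverse.map inv) = g⁻¹ := by rw [evalWord_revInv hinv, hw]
  calc wordLength f g⁻¹ = wordLength f (evalWord f (w.reverse.map inv)) := by rw [this]
    _ ≤ (w.reverse.map inv).length := wordLength_le _
    _ = wordLength f g := by simp [hl]

lemma wordLength_inv (hgen : ∀ g : G, ∃ w : List X, evalWord f w = g) (g : G) :
    wordLength f g⁻¹ = wordLength f g := by
  refine le_antisymm (wordLength_inv_le hinv hgen g) ?_
  simpa using wordLength_inv_le hinv hgen g⁻¹

end inv

lemma isSubword_trans {u v w : List X} (h1 : IsSubword u v) (h2 : IsSubword v w) :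
    IsSubword u w := by
  obtain ⟨a, b, rfl⟩ := h1
  obtain ⟨c, d, rfl⟩ := h2
  exact ⟨c ++ a, b ++ d, by simp⟩

lemma isSubword_drop_take (w : List X) (i n : ℕ) : IsSubword ((w.drop i).take n) w :=
  ⟨w.take i, (w.drop i).drop n, by
    rw [List.append_assoc, List.take_append_drop, List.take_append_drop]⟩

lemma isSubword_iff {u w : List X} :
    IsSubword u w ↔ ∃ i, i + u.length ≤ w.length ∧ u = (w.drop i).take u.length := by
  constructor
  · rintro ⟨v₁, v₂, rfl⟩
    refine ⟨v₁.length, by simp, ?_⟩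
    rw [List.append_assoc, List.drop_left, List.take_left]
  · rintro ⟨i, -, hu⟩
    rw [hu]
    exact isSubword_drop_take w i u.length

lemma subword_of_geodesic {u w : List X}
    (hgen : ∀ g : G, ∃ w : List X, evalWord f w = g)
    (hw : wordLength f (evalWord f w) = w.length) (hsub : IsSubword u w) :
    wordLength f (evalWord f u) = u.length := by
  obtain ⟨v₁, v₂, rfl⟩ := hsub
  refine le_antisymm (wordLength_le u) ?_
  by_contra hlt
  push_neg at hlt
  have h1 : evalWord f (v₁ ++ u ++ v₂) = evalWord f v₁ * evalWord f u * evalWord f v₂ := by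
    rw [evalWord_append, evalWord_append]
  have h2 : wordLength f (evalWord f (v₁ ++ u ++ v₂)) ≤
      v₁.length + wordLength f (evalWord f u) + v₂.length := by
    rw [h1]
    calc wordLength f (evalWord f v₁ * evalWord f u * evalWord f v₂)
        ≤ wordLength f (evalWord f v₁ * evalWord f u) + wordLength f (evalWord f v₂) :=
          wordLength_mul_le hgen _ _
      _ ≤ wordLength f (evalWord f v₁) + wordLength f (evalWord f u)
            + wordLength f (evalWord f v₂) := by
          have := wordLength_mul_le hgen (evalWord f v₁) (evalWord f u)
          omega
      _ ≤ v₁.length + wordLength f (evalWord f u) + v₂.length := by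
          have := wordLength_le (f := f) v₁
          have := wordLength_le (f := f) v₂
          omega
  rw [hw] at h2
  simp [List.length_append] at h2
  omega

lemma exists_geodesic_word_of_word (w : List X) :
    ∃ w' : List X, evalWord f w' = evalWord f w ∧ w'.length = wordLength f (evalWord f w) := by
  have hne : {n : ℕ | ∃ v : List X, v.length = n ∧ evalWord f v = evalWord f w}.Nonempty :=
    ⟨w.length, w, rfl, rfl⟩
  obtain ⟨w', hw1, hw2⟩ := Nat.sInf_mem hne
  exact ⟨w', hw2, hw1⟩

section graph

open SimpleGraph

lemma geodesic_word_cons {x : X} {t : List X}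
    (hgeo : wordLength f (evalWord f (x :: t)) = (x :: t).length) :
    wordLength f (evalWord f t) = t.length ∧ f x ≠ 1 := by
  have hle : wordLength f (evalWord f t) ≤ t.length := wordLength_le t
  obtain ⟨w', hw', hl'⟩ := exists_geodesic_word_of_word (f := f) t
  have h1 : wordLength f (evalWord f (x :: t)) ≤ 1 + wordLength f (evalWord f t) := by
    have : evalWord f (x :: w') = evalWord f (x :: t) := by
      rw [evalWord_cons, evalWord_cons, hw']
    calc wordLength f (evalWord f (x :: t)) = wordLength f (evalWord f (x :: w')) := by rw [this]
      _ ≤ (x :: w').length := wordLength_le _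
      _ = 1 + wordLength f (evalWord f t) := by simp [hl']; omega
  constructor
  · rw [hgeo] at h1; simp at h1 ⊢; omega
  · intro hx1
    have : evalWord f (x :: t) = evalWord f t := by rw [evalWord_cons, hx1, one_mul]
    rw [this] at hgeo
    simp at hgeo
    omega

lemma walk_of_geodesic_word :
    ∀ (w : List X), wordLength f (evalWord f w) = w.length → ∀ g : G,
    ∃ p : (cayley f).Walk g (g * evalWord f w), p.length = w.length := by
  intro w
  induction w with
  | nil =>
    intro _ g
    exact ⟨Walk.nil.copy rfl (by simp [evalWord]), by simp⟩
  | cons x t ih =>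
    intro hgeo g
    obtain ⟨ht, hx⟩ := geodesic_word_cons hgeo
    obtain ⟨p, hp⟩ := ih ht (g * f x)
    have hadj : (cayley f).Adj g (g * f x) := by
      refine ⟨?_, x, Or.inl rfl⟩
      intro h
      exact hx (by
        have := h.symm
        rwa [mul_eq_left] at this)
    refine ⟨(Walk.cons hadj p).copy rfl (by rw [evalWord_cons, mul_assoc]), ?_⟩
    simp [hp]

lemma cayley_preconnected (hgen : ∀ g : G, ∃ w : List X, evalWord f w = g) :
    (cayley f).Preconnected := by
  intro g h
  obtain ⟨w, hw, hl⟩ := exists_geodesic_word hgen (g⁻¹ * h)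
  have hgeo : wordLength f (evalWord f w) = w.length := by rw [hw, hl]
  obtain ⟨p, -⟩ := walk_of_geodesic_word w hgeo g
  exact ⟨p.copy rfl (by rw [hw, mul_inv_cancel_left])⟩

lemma cayley_connected (hgen : ∀ g : G, ∃ w : List X, evalWord f w = g) :
    (cayley f).Connected :=
  haveI : Nonempty G := ⟨1⟩
  SimpleGraph.Connected.mk (cayley_preconnected hgen)

lemma word_of_walk {inv : X → X} (hinv : ∀ x : X, f (inv x) = (f x)⁻¹) :
    ∀ {g h : G} (p : (cayley f).Walk g h),
    ∃ w : List X, w.length = p.length ∧ g * evalWord f w = h := by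
  intro g h p
  induction p with
  | nil => exact ⟨[], rfl, by simp [evalWord]⟩
  | @cons a m c hadj p ih =>
    obtain ⟨w, hw, hew⟩ := ih
    obtain ⟨-, x, hx | hx⟩ := hadj
    · exact ⟨x :: w, by simp [hw]; rfl, by rw [evalWord_cons, ← mul_assoc, hx, hew]⟩
    · refine ⟨inv x :: w, by simp [hw]; rfl, ?_⟩
      rw [evalWord_cons, ← mul_assoc, hinv, ← hx]
      rw [mul_inv_cancel_right, hew]

lemma dist_eq_wordLength (hgen : ∀ g : G, ∃ w : List X, evalWord f w = g)
    {inv : X → X} (hinv : ∀ x : X, f (inv x) = (f x)⁻¹) (g h : G) :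
    (cayley f).dist g h = wordLength f (g⁻¹ * h) := by
  refine le_antisymm ?_ ?_
  · obtain ⟨w, hw, hl⟩ := exists_geodesic_word hgen (g⁻¹ * h)
    have hgeo : wordLength f (evalWord f w) = w.length := by rw [hw, hl]
    obtain ⟨p, hp⟩ := walk_of_geodesic_word w hgeo g
    calc (cayley f).dist g h = (cayley f).dist g (g * evalWord f w) := by
          rw [hw, mul_inv_cancel_left]
      _ ≤ p.length := SimpleGraph.dist_le p
      _ = wordLength f (g⁻¹ * h) := by rw [hp, hl]
  · obtain ⟨p, hp⟩ := (cayley_preconnected hgen g h).exists_walk_length_eq_dist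
    obtain ⟨w, hw, hew⟩ := word_of_walk hinv p
    have : evalWord f w = g⁻¹ * h := by rw [← hew, inv_mul_cancel_left]
    calc wordLength f (g⁻¹ * h) = wordLength f (evalWord f w) := by rw [this]
      _ ≤ w.length := wordLength_le w
      _ = (cayley f).dist g h := by rw [hw, hp]

end graph

section geo

open SimpleGraph

variable {V : Type*} [DecidableEq V] {Γ : SimpleGraph V}

lemma take_add_drop_length {x y u : V} (p : Γ.Walk x y) (hu : u ∈ p.support) :
    (p.takeUntil u hu).length + (p.dropUntil u hu).length = p.length := by
  conv_rhs => rw [← p.take_spec hu]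
  rw [Walk.length_append]

lemma sub_geodesic (hconn : Γ.Connected) {x y u : V} (p : Γ.Walk x y)
    (hp : p.length = Γ.dist x y) (hu : u ∈ p.support) :
    (p.takeUntil u hu).length = Γ.dist x u ∧ (p.dropUntil u hu).length = Γ.dist u y := by
  have h1 := take_add_drop_length p hu
  have h2 : Γ.dist x u ≤ (p.takeUntil u hu).length := SimpleGraph.dist_le _
  have h3 : Γ.dist u y ≤ (p.dropUntil u hu).length := SimpleGraph.dist_le _
  have h4 : Γ.dist x y ≤ Γ.dist x u + Γ.dist u y := hconn.dist_triangle
  omega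

lemma position_on_geodesic (hconn : Γ.Connected) {x y u : V} (p : Γ.Walk x y)
    (hp : p.length = Γ.dist x y) (hu : u ∈ p.support) :
    Γ.dist x u + Γ.dist u y = Γ.dist x y := by
  obtain ⟨h1, h2⟩ := sub_geodesic hconn p hp hu
  have := take_add_drop_length p hu
  omega

lemma two_points_on_geodesic (hconn : Γ.Connected) {x y u v : V} (p : Γ.Walk x y)
    (hp : p.length = Γ.dist x y) (hu : u ∈ p.support) (hv : v ∈ p.support) :
    Γ.dist x u + Γ.dist u v = Γ.dist x v ∨ Γ.dist x v + Γ.dist u v = Γ.dist x u := by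
  obtain ⟨h1, h2⟩ := sub_geodesic hconn p hp hu
  have hv' : v ∈ ((p.takeUntil u hu).append (p.dropUntil u hu)).support := by
    rw [p.take_spec hu]; exact hv
  rw [Walk.mem_support_append_iff] at hv'
  rcases hv' with hv1 | hv2
  · right
    have := position_on_geodesic hconn (p.takeUntil u hu) h1 hv1
    have hcomm : Γ.dist v u = Γ.dist u v := SimpleGraph.dist_comm ..
    omega
  · left
    have h3 := position_on_geodesic hconn (p.dropUntil u hu) h2 hv2
    have h4 := position_on_geodesic hconn p hp hu
    have h5 := position_on_geodesic hconn p hp hv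
    omega

lemma subwalk_between (hconn : Γ.Connected) {x y u v : V} (p : Γ.Walk x y)
    (hp : p.length = Γ.dist x y) (hu : u ∈ p.support) (hv : v ∈ p.support) :
    ∃ q : Γ.Walk u v, q.length = Γ.dist u v ∧ ∀ z ∈ q.support, z ∈ p.support := by
  obtain ⟨h1, h2⟩ := sub_geodesic hconn p hp hu
  have hv' : v ∈ ((p.takeUntil u hu).append (p.dropUntil u hu)).support := by
    rw [p.take_spec hu]; exact hv
  rw [Walk.mem_support_append_iff] at hv'
  rcases hv' with hv1 | hv2
  · have h3 := (sub_geodesic hconn (p.takeUntil u hu) h1 hv1).2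
    refine ⟨((p.takeUntil u hu).dropUntil v hv1).reverse, ?_, ?_⟩
    · rw [Walk.length_reverse, h3, SimpleGraph.dist_comm]
    · intro z hz
      rw [Walk.support_reverse, List.mem_reverse] at hz
      exact Walk.support_takeUntil_subset p hu (Walk.support_dropUntil_subset _ hv1 hz)
  · have h3 := (sub_geodesic hconn (p.dropUntil u hu) h2 hv2).1
    refine ⟨(p.dropUntil u hu).takeUntil v hv2, h3, ?_⟩
    intro z hz
    exact Walk.support_dropUntil_subset p hu (Walk.support_takeUntil_subset _ hv2 hz)

lemma exists_nearest {x y : V} (p : Γ.Walk x y) (g : V) :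
    ∃ v, v ∈ p.support ∧ ∀ w ∈ p.support, Γ.dist g v ≤ Γ.dist g w := by
  classical
  have hne : p.support.toFinset.Nonempty := by
    rw [List.toFinset_nonempty_iff]
    exact p.support_ne_nil
  obtain ⟨v, hv, hmin⟩ := p.support.toFinset.exists_min_image (fun w => Γ.dist g w) hne
  rw [List.mem_toFinset] at hv
  exact ⟨v, hv, fun w hw => hmin w (List.mem_toFinset.mpr hw)⟩

lemma mem_support_length_zero {x y : V} (p : Γ.Walk x y) (hp : p.length = 0) :
    ∀ v ∈ p.support, v = x := by
  cases p with
  | nil => intro v hv; simpa using hv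
  | cons h q => simp at hp

end geo
end QG3

namespace QG3

lemma drop_split {A : Type*} (l : List A) {a b : ℕ} (hab : a ≤ b) (hb : b ≤ l.length) :
    l.drop a = (l.take b).drop a ++ l.drop b := by
  conv_lhs => rw [← List.take_append_drop b l]
  rw [List.drop_append]
  have h1 : a - (l.take b).length = 0 := by
    simp only [List.length_take]
    omega
  rw [h1, List.drop_zero]

variable {G : Type*} [Group G] {X : Type*} {f : X → G}

section claimA

open SimpleGraph

variable [DecidableEq G]
  (hgen : ∀ g : G, ∃ w : List X, evalWord f w = g)
  {inv : X → X} (hinv : ∀ x : X, f (inv x) = (f x)⁻¹)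
  {δ : ℕ} (hδ : 0 < δ) (hhyp : SlimTriangles (cayley f) δ)

include hgen hinv hδ hhyp in
lemma claimA (u : List X)
    (hloc : ∀ w, IsSubword w u → w.length ≤ 180 * δ → wordLength f (evalWord f w) = w.length)
    (r : (cayley f).Walk 1 (evalWord f u))
    (hr : r.length = (cayley f).dist 1 (evalWord f u)) :
    ∀ i, ∃ v ∈ r.support, (cayley f).dist (evalWord f (u.take i)) v ≤ 2 * δ := by
  have hconn : (cayley f).Connected := cayley_connected hgen
  choose np hnp hnpmin using fun g => exists_nearest r g
  set m := u.length with hm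
  set P : ℕ → G := fun i => evalWord f (u.take i) with hP
  set ds : ℕ → ℕ := fun i => (cayley f).dist (P i) (np (P i)) with hds
  obtain ⟨i₀, hi₀mem, hmax⟩ :=
    Finset.exists_max_image (Finset.range (m + 1)) ds ⟨0, by simp⟩
  have hj : i₀ ≤ m := by
    have := Finset.mem_range.mp hi₀mem
    omega
  -- the key claim
  have hkey : ds i₀ ≤ 2 * δ := by
    set j := i₀ with hjdef
    set ia := j - 90 * δ with hia
    set ib := min (j + 90 * δ) m with hib
    have hiaj : ia ≤ j := by omega
    have hjib : j ≤ ib := by omega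
    have hibm : ib ≤ m := by omega
    set w₁ := (u.take j).drop ia with hw₁
    set w₂ := (u.take ib).drop j with hw₂
    have len1 : w₁.length = j - ia := by
      simp [hw₁, List.length_drop, List.length_take]
      omega
    have len2 : w₂.length = ib - j := by
      simp [hw₂, List.length_drop, List.length_take]
      omega
    have hw1eq : w₁ = (u.drop ia).take (j - ia) := by rw [hw₁, List.drop_take]
    have hw2eq : w₂ = (u.drop j).take (ib - j) := by rw [hw₂, List.drop_take]
    have geo1 : wordLength f (evalWord f w₁) = w₁.length := by
      refine hloc w₁ ?_ ?_
      · rw [hw1eq]; exact isSubword_drop_take u ia (j - ia)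
      · omega
    have geo2 : wordLength f (evalWord f w₂) = w₂.length := by
      refine hloc w₂ ?_ ?_
      · rw [hw2eq]; exact isSubword_drop_take u j (ib - j)
      · omega
    have hw12 : w₁ ++ w₂ = (u.take ib).drop ia := by
      have htj : u.take j = (u.take ib).take j := by
        rw [List.take_take, min_eq_left hjib]
      rw [hw₁, hw₂, htj]
      exact (drop_split (u.take ib) hiaj (by
        simp only [List.length_take]
        omega)).symm
    have geo12 : wordLength f (evalWord f (w₁ ++ w₂)) = (w₁ ++ w₂).length := by
      refine hloc _ ?_ ?_
      · rw [hw12, List.drop_take]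
        exact isSubword_drop_take u ia (ib - ia)
      · rw [List.length_append]; omega
    -- points
    have hpa : P ia * evalWord f w₁ = P j := by
      rw [hP]
      simp only
      rw [← evalWord_append]
      congr 1
      have : (u.take j).take ia = u.take ia := by
        rw [List.take_take, min_eq_left hiaj]
      rw [← this, List.take_append_drop]
    have hpb : P j * evalWord f w₂ = P ib := by
      rw [hP]
      simp only
      rw [← evalWord_append]
      congr 1
      have : (u.take ib).take j = u.take j := by
        rw [List.take_take, min_eq_left hjib]
      rw [← this, List.take_append_drop]
    -- the local geodesic walk γ from (P ia) to (P ib) through (P j)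
    obtain ⟨γ₁, hγ₁⟩ := walk_of_geodesic_word w₁ geo1 (P ia)
    obtain ⟨γ₂, hγ₂⟩ := walk_of_geodesic_word w₂ geo2 (P j)
    set γ := (γ₁.copy rfl hpa).append (γ₂.copy rfl hpb) with hγ
    have hγlen : γ.length = w₁.length + w₂.length := by
      rw [hγ, Walk.length_append, Walk.length_copy, Walk.length_copy, hγ₁, hγ₂]
    have habdist : (cayley f).dist (P ia) (P ib) = w₁.length + w₂.length := by
      rw [dist_eq_wordLength hgen hinv]
      have : (P ia)⁻¹ * P ib = evalWord f (w₁ ++ w₂) := by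
        rw [← hpb, ← hpa, evalWord_append]
        group
      rw [this, geo12, List.length_append]
    have hγgeo : γ.length = (cayley f).dist (P ia) (P ib) := by rw [hγlen, habdist]
    have hpmem : P j ∈ γ.support := by
      rw [hγ, Walk.mem_support_append_iff]
      exact Or.inl ((γ₁.copy rfl hpa).end_mem_support)
    -- projections
    set a' := np (P ia) with ha'
    set b' := np (P ib) with hb'
    obtain ⟨α, hα⟩ := hconn.exists_walk_length_eq_dist (P ia) a'
    obtain ⟨diag, hdiag⟩ := hconn.exists_walk_length_eq_dist a' (P ib)
    obtain ⟨β, hβ⟩ := hconn.exists_walk_length_eq_dist (P ib) b'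
    obtain ⟨ρ, hρlen, hρsub⟩ := subwalk_between hconn r hr (hnp (P ia)) (hnp (P ib))
    -- first triangle
    obtain ⟨v, hv, hdpv⟩ := hhyp (P ia) (P ib) a' γ diag.reverse α hγgeo
      (by rw [Walk.length_reverse, hdiag, SimpleGraph.dist_comm]) hα (P j) hpmem
    rcases hv with hv | hv
    · -- v on the diagonal: second triangle
      rw [Walk.support_reverse, List.mem_reverse] at hv
      obtain ⟨v₂, hv₂, hdvv₂⟩ := hhyp a' (P ib) b' diag β ρ hdiag hβ hρlen v hv
      rcases hv₂ with hv₂ | hv₂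
      · -- v₂ on β (the side at b); analyze
        by_cases hbm : j + 90 * δ ≤ m
        · have hibeq : ib = j + 90 * δ := by omega
          have hdistpb : (cayley f).dist (P j) (P ib) = 90 * δ := by
            rw [dist_eq_wordLength hgen hinv]
            have : (P j)⁻¹ * P ib = evalWord f w₂ := by rw [← hpb]; group
            rw [this, geo2, len2]
            omega
          have hpos : (cayley f).dist (P ib) v₂ + (cayley f).dist v₂ b' =
              (cayley f).dist (P ib) b' := position_on_geodesic hconn β hβ hv₂
          have hbb' : (cayley f).dist (P ib) b' ≤ ds j := by
            have : ds ib ≤ ds i₀ := hmax ib (Finset.mem_range.mpr (by omega))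
            exact this
          have htriA : (cayley f).dist (P j) (P ib) ≤
              (cayley f).dist (P j) v₂ + (cayley f).dist v₂ (P ib) := hconn.dist_triangle
          have htriB : (cayley f).dist (P j) v₂ ≤
              (cayley f).dist (P j) v + (cayley f).dist v v₂ := hconn.dist_triangle
          have hcomm1 : (cayley f).dist v₂ (P ib) = (cayley f).dist (P ib) v₂ :=
            SimpleGraph.dist_comm ..
          have hdsj : ds j ≤ (cayley f).dist (P j) b' := hnpmin (P j) b' (hnp (P ib))
          have htriC : (cayley f).dist (P j) b' ≤
              (cayley f).dist (P j) v₂ + (cayley f).dist v₂ b' := hconn.dist_triangle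
          omega
        · have hibeq : ib = m := by omega
          have hbu : P ib = evalWord f u := by
            rw [hP]
            simp only
            rw [hibeq, hm, List.take_length]
          have hbmem : P ib ∈ r.support := by rw [hbu]; exact r.end_mem_support
          have hb0 : (cayley f).dist (P ib) b' = 0 := by
            have h1 : (cayley f).dist (P ib) b' ≤ (cayley f).dist (P ib) (P ib) :=
              hnpmin (P ib) (P ib) hbmem
            rwa [SimpleGraph.dist_self, Nat.le_zero] at h1
          have hβ0 : β.length = 0 := by rw [hβ, hb0]
          have hv₂b : v₂ = P ib := mem_support_length_zero β hβ0 v₂ hv₂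
          have hdsj : ds j ≤ (cayley f).dist (P j) (P ib) := hnpmin (P j) (P ib) hbmem
          have htri : (cayley f).dist (P j) (P ib) ≤
              (cayley f).dist (P j) v + (cayley f).dist v (P ib) := hconn.dist_triangle
          rw [hv₂b] at hdvv₂
          omega
      · -- v₂ on ρ ⊆ r: done
        have hv₂r : v₂ ∈ r.support := hρsub v₂ hv₂
        have hdsj : ds j ≤ (cayley f).dist (P j) v₂ := hnpmin (P j) v₂ hv₂r
        have htri : (cayley f).dist (P j) v₂ ≤
            (cayley f).dist (P j) v + (cayley f).dist v v₂ := hconn.dist_triangle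
        omega
    · -- v on α (the side at a)
      by_cases ham : 90 * δ ≤ j
      · have hiaeq : ia = j - 90 * δ := rfl
        have hdistap : (cayley f).dist (P ia) (P j) = 90 * δ := by
          rw [dist_eq_wordLength hgen hinv]
          have : (P ia)⁻¹ * P j = evalWord f w₁ := by rw [← hpa]; group
          rw [this, geo1, len1]
          omega
        have hpos : (cayley f).dist (P ia) v + (cayley f).dist v a' =
            (cayley f).dist (P ia) a' := position_on_geodesic hconn α hα hv
        have haa' : (cayley f).dist (P ia) a' ≤ ds j :=
          hmax ia (Finset.mem_range.mpr (by omega))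
        have htriA : (cayley f).dist (P ia) (P j) ≤
            (cayley f).dist (P ia) v + (cayley f).dist v (P j) := hconn.dist_triangle
        have hcomm : (cayley f).dist v (P j) = (cayley f).dist (P j) v :=
          SimpleGraph.dist_comm ..
        have hdsj : ds j ≤ (cayley f).dist (P j) a' := hnpmin (P j) a' (hnp (P ia))
        have htriB : (cayley f).dist (P j) a' ≤
            (cayley f).dist (P j) v + (cayley f).dist v a' := hconn.dist_triangle
        omega
      · have hia0 : ia = 0 := by omega
        have ha1 : P ia = 1 := by
          rw [hP]
          simp only
          rw [hia0, List.take_zero]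
          rfl
        have h1mem : (1 : G) ∈ r.support := r.start_mem_support
        have ha0 : (cayley f).dist (P ia) a' = 0 := by
          have h1 : (cayley f).dist (P ia) a' ≤ (cayley f).dist (P ia) (1 : G) := by
            exact hnpmin (P ia) 1 h1mem
          rw [ha1] at h1
          rw [SimpleGraph.dist_self] at h1
          rw [ha1]
          omega
        have hα0 : α.length = 0 := by rw [hα, ha0]
        have hva : v = P ia := mem_support_length_zero α hα0 v hv
        have hdsj : ds j ≤ (cayley f).dist (P j) (1 : G) := hnpmin (P j) 1 h1mem
        rw [hva, ha1] at hdpv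
        omega
  -- conclude
  intro i
  rcases le_or_gt i m with him | him
  · refine ⟨np (P i), hnp (P i), ?_⟩
    have : ds i ≤ ds i₀ := hmax i (Finset.mem_range.mpr (by omega))
    calc (cayley f).dist (evalWord f (u.take i)) (np (P i)) = ds i := rfl
      _ ≤ ds i₀ := this
      _ ≤ 2 * δ := hkey
  · have hPi : P i = P m := by
      rw [hP]
      simp only
      rw [hm, List.take_length, List.take_of_length_le (by omega)]
    refine ⟨np (P m), hnp (P m), ?_⟩
    have h1 : ds m ≤ ds i₀ := hmax m (Finset.mem_range.mpr (by omega))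
    have h2 : (cayley f).dist (P m) (np (P m)) ≤ 2 * δ := le_trans h1 hkey
    show (cayley f).dist (P i) (np (P m)) ≤ 2 * δ
    rwa [hPi]

end claimA
end QG3

namespace QG3

section claimB

open SimpleGraph

variable {G : Type*} [Group G] {X : Type*} {f : X → G} [DecidableEq G]
  (hgen : ∀ g : G, ∃ w : List X, evalWord f w = g)
  {inv : X → X} (hinv : ∀ x : X, f (inv x) = (f x)⁻¹)
  {δ : ℕ} (hδ : 0 < δ) (hhyp : SlimTriangles (cayley f) δ)

omit [DecidableEq G] in
lemma dist_quadr (hconn : (cayley f).Connected) (x x' y y' : G) (k : ℕ)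
    (h1 : (cayley f).dist x y ≤ k) (h2 : (cayley f).dist x' y' ≤ k) :
    (cayley f).dist x x' ≤ (cayley f).dist y y' + 2 * k ∧
      (cayley f).dist y y' ≤ (cayley f).dist x x' + 2 * k := by
  have t1 : (cayley f).dist x x' ≤ (cayley f).dist x y + (cayley f).dist y x' :=
    hconn.dist_triangle
  have t2 : (cayley f).dist y x' ≤ (cayley f).dist y y' + (cayley f).dist y' x' :=
    hconn.dist_triangle
  have c1 : (cayley f).dist y' x' = (cayley f).dist x' y' := SimpleGraph.dist_comm ..
  have t3 : (cayley f).dist y y' ≤ (cayley f).dist y x + (cayley f).dist x y' :=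
    hconn.dist_triangle
  have t4 : (cayley f).dist x y' ≤ (cayley f).dist x x' + (cayley f).dist x' y' :=
    hconn.dist_triangle
  have c2 : (cayley f).dist y x = (cayley f).dist x y := SimpleGraph.dist_comm ..
  omega

include hgen hinv hδ hhyp in
lemma local_to_global (u : List X)
    (hloc : ∀ w, IsSubword w u → w.length ≤ 180 * δ → wordLength f (evalWord f w) = w.length) :
    u.length ≤ 4 * wordLength f (evalWord f u) + 2520 * δ := by
  have hconn : (cayley f).Connected := cayley_connected hgen
  set m := u.length with hm
  set s := 80 * δ with hsdef
  have hs : 0 < s := by omega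
  obtain ⟨r, hr⟩ := hconn.exists_walk_length_eq_dist (1 : G) (evalWord f u)
  have h2δ := claimA hgen hinv hδ hhyp u hloc r hr
  choose q hq hq2 using h2δ
  set P : ℕ → G := fun i => evalWord f (u.take i) with hP
  set N := m / s with hN
  -- distances along the path
  have Fseg : ∀ i j, i ≤ j → j ≤ m → j - i ≤ 180 * δ →
      (cayley f).dist (P i) (P j) = j - i := by
    intro i j hij hjm hdiff
    have hsub : IsSubword ((u.take j).drop i) u := by
      rw [List.drop_take]
      exact isSubword_drop_take u i (j - i)
    have hlen : ((u.take j).drop i).length = j - i := by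
      simp only [List.length_drop, List.length_take]
      omega
    have hgeo := hloc _ hsub (by omega)
    have hpij : P i * evalWord f ((u.take j).drop i) = P j := by
      rw [hP]
      simp only
      rw [← evalWord_append]
      congr 1
      have : (u.take j).take i = u.take i := by
        rw [List.take_take, min_eq_left hij]
      rw [← this, List.take_append_drop]
    rw [dist_eq_wordLength hgen hinv]
    have : (P i)⁻¹ * P j = evalWord f ((u.take j).drop i) := by rw [← hpij]; group
    rw [this, hgeo, hlen]
  have hNs : N * s ≤ m := Nat.div_mul_le_self m s
  -- projections of the sampled points
  set Q : ℕ → G := fun i => q (i * s) with hQ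
  set M : ℕ → ℕ := fun i => (cayley f).dist 1 (Q i) with hM
  have hQr : ∀ i, Q i ∈ r.support := fun i => hq (i * s)
  have hQ2 : ∀ i, (cayley f).dist (P (i * s)) (Q i) ≤ 2 * δ := fun i => hq2 (i * s)
  have hK : ∀ i j, (cayley f).dist 1 (Q i) + (cayley f).dist (Q i) (Q j)
      = (cayley f).dist 1 (Q j) ∨
      (cayley f).dist 1 (Q j) + (cayley f).dist (Q i) (Q j) = (cayley f).dist 1 (Q i) :=
    fun i j => two_points_on_geodesic hconn r hr (hQr i) (hQr j)
  have hDlohi : ∀ i k, i + k ≤ N → k * s ≤ 180 * δ →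
      k * s ≤ (cayley f).dist (Q i) (Q (i + k)) + 4 * δ ∧
      (cayley f).dist (Q i) (Q (i + k)) ≤ k * s + 4 * δ := by
    intro i k hik hbound
    have hjs : (i + k) * s ≤ m := le_trans (Nat.mul_le_mul_right s hik) hNs
    have hseg : (cayley f).dist (P (i * s)) (P ((i + k) * s)) = (i + k) * s - i * s := by
      refine Fseg (i * s) ((i + k) * s) (Nat.mul_le_mul_right s (by omega)) hjs ?_
      have : (i + k) * s = i * s + k * s := by ring
      omega
    have hsub : (i + k) * s = i * s + k * s := by ring
    obtain ⟨hA, hB⟩ := dist_quadr hconn (P (i * s)) (P ((i + k) * s)) (Q i) (Q (i + k)) (2 * δ)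
      (hQ2 i) (hQ2 (i + k))
    omega
  have hM0 : M 0 ≤ 2 * δ := by
    have h0 : P (0 * s) = 1 := by
      rw [hP]
      simp only
      rw [Nat.zero_mul, List.take_zero]
      rfl
    have := hQ2 0
    rw [h0] at this
    exact this
  -- the points march monotonically along r
  have Hstep : ∀ i, i + 1 ≤ N → M i + 76 * δ ≤ M (i + 1) := by
    intro i
    induction i with
    | zero =>
      intro h1
      have hb := hDlohi 0 1 (by omega) (by omega)
      have hk := hK 0 1
      simp only [show (0 : ℕ) + 1 = 1 from rfl] at hb ⊢
      simp only [hM] at *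
      omega
    | succ i ih =>
      intro h2
      have hi1 := ih (by omega)
      have hb12 := hDlohi (i + 1) 1 (by omega) (by omega)
      have hb02 := hDlohi i 2 (by omega) (by omega)
      have hb01 := hDlohi i 1 (by omega) (by omega)
      have hk12 := hK (i + 1) (i + 2)
      have hk02 := hK i (i + 2)
      have hk01 := hK i (i + 1)
      simp only [show ∀ j : ℕ, j + 1 + 1 = j + 2 from fun j => rfl] at hb12 ⊢
      simp only [hM] at *
      omega
  have Msum : ∀ i, i ≤ N → 76 * δ * i ≤ M i := by
    intro i
    induction i with
    | zero => intro _; omega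
    | succ i ih =>
      intro h
      have h1 := ih (by omega)
      have h2 := Hstep i (by omega)
      have : 76 * δ * (i + 1) = 76 * δ * i + 76 * δ := by ring
      omega
  have Mend : M N ≤ (cayley f).dist 1 (evalWord f u) := by
    have := position_on_geodesic hconn r hr (hQr N)
    simp only [hM]
    omega
  have hdy : (cayley f).dist 1 (evalWord f u) = wordLength f (evalWord f u) := by
    rw [dist_eq_wordLength hgen hinv, inv_one, one_mul]
  set t := δ * N with ht
  have h1 : 76 * t ≤ M N := by
    have := Msum N (le_refl N)
    calc 76 * t = 76 * δ * N := by rw [ht]; ring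
      _ ≤ M N := this
  have h2 : M N ≤ wordLength f (evalWord f u) := by rw [← hdy]; exact Mend
  have hmod : m < 80 * t + 80 * δ := by
    have ha : s * N + m % s = m := by rw [hN]; exact Nat.div_add_mod m s
    have hb : m % s < s := Nat.mod_lt m hs
    have hc : s * N = 80 * t := by rw [hsdef, ht]; ring
    omega
  omega

end claimB
end QG3


namespace QG3

variable {G : Type*} [Group G] {X : Type*} {f : X → G}

lemma wordNPow_succ' (w : List X) (n : ℕ) : wordNPow w (n + 1) = wordNPow w n ++ w := by
  induction n with
  | zero => simp [wordNPow]
  | succ n ih =>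
    show w ++ wordNPow w (n + 1) = (w ++ wordNPow w n) ++ w
    rw [ih, List.append_assoc]

lemma wordNPow_rev (inv : X → X) (w : List X) (n : ℕ) :
    wordNPow (w.reverse.map inv) n = (wordNPow w n).reverse.map inv := by
  induction n with
  | zero => simp [wordNPow]
  | succ n ih =>
    rw [wordNPow_succ', ih]
    rw [show wordNPow w (n + 1) = w ++ wordNPow w n from rfl, List.reverse_append,
      List.map_append]

lemma subword_reverse {w M : List X} (h : IsSubword w M.reverse) : IsSubword w.reverse M := by
  obtain ⟨v₁, v₂, hv⟩ := h
  refine ⟨v₂.reverse, v₁.reverse, ?_⟩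
  have : M = (v₁ ++ w ++ v₂).reverse := by rw [← hv, List.reverse_reverse]
  rw [this]
  simp [List.reverse_append, List.append_assoc]

lemma subword_map {inv : X → X} {w L : List X} (h : IsSubword w (L.map inv)) :
    ∃ w₀, IsSubword w₀ L ∧ w = w₀.map inv := by
  obtain ⟨i, hlen, hw⟩ := isSubword_iff.mp h
  refine ⟨(L.drop i).take w.length, isSubword_drop_take L i w.length, ?_⟩
  conv_lhs => rw [hw]
  rw [← List.map_drop, ← List.map_take]

lemma subword_rev_map {inv : X → X} {w L : List X} (h : IsSubword w (L.reverse.map inv)) :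
    ∃ w₀, IsSubword w₀ L ∧ w = w₀.reverse.map inv := by
  rw [List.map_reverse] at h
  have h3 := subword_reverse h
  obtain ⟨w₀, hw₀, hmap⟩ := subword_map h3
  refine ⟨w₀, hw₀, ?_⟩
  rw [List.map_reverse, ← hmap, List.reverse_reverse]

lemma subword_npow_shift {V w : List X} {n : ℕ} (h : IsSubword w (wordNPow V n))
    (hlen : w.length ≤ V.length) :
    ∃ j ≤ V.length, IsSubword w (V.drop j ++ V.take j) := by
  induction n with
  | zero =>
    obtain ⟨v₁, v₂, hv⟩ := h
    have : w = [] := by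
      have := congrArg List.length hv
      simp [wordNPow] at this
      exact List.length_eq_zero_iff.mp (by omega)
    subst this
    exact ⟨0, by omega, [], V.drop 0 ++ V.take 0, by simp⟩
  | succ n ih =>
    obtain ⟨i, hilen, hw⟩ := isSubword_iff.mp h
    rcases le_or_gt V.length i with hVi | hVi
    · -- inside the tail power
      refine ih (isSubword_iff.mpr ⟨i - V.length, ?_, ?_⟩)
      · have : (wordNPow V (n+1)).length = V.length + (wordNPow V n).length := by
          show (V ++ wordNPow V n).length = _
          simp
        omega
      · conv_lhs => rw [hw]
        show ((V ++ wordNPow V n).drop i).take w.length = _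
        rw [List.drop_append, List.drop_eq_nil_of_le (by omega),
          List.nil_append]
    · rcases le_or_gt w.length (V.length - i) with hsmall | hbig
      · -- inside the first V
        refine ⟨0, by omega, ?_⟩
        have : IsSubword w V := by
          refine isSubword_iff.mpr ⟨i, by omega, ?_⟩
          conv_lhs => rw [hw]
          show ((V ++ wordNPow V n).drop i).take w.length = _
          rw [List.drop_append, Nat.sub_eq_zero_of_le (by omega),
            List.drop_zero, List.take_append_of_le_length]
          simp only [List.length_drop]
          omega
        rw [List.drop_zero, List.take_zero]
        obtain ⟨v₁, v₂, hv⟩ := this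
        exact ⟨v₁, v₂ ++ [], by rw [hv]; simp⟩
      · -- straddles the junction
        cases n with
        | zero =>
          exfalso
          have : (wordNPow V (0 + 1)).length = V.length := by
            show (V ++ ([] : List X)).length = _
            simp
          omega
        | succ n =>
          set k := w.length - (V.length - i) with hk
          have hki : k ≤ i := by omega
          refine ⟨i, by omega, ?_⟩
          have hweq : w = V.drop i ++ V.take k := by
            rw [hw]
            show ((V ++ wordNPow V (n+1)).drop i).take w.length = _
            rw [List.drop_append, Nat.sub_eq_zero_of_le (by omega),
              List.drop_zero, List.take_append]
            congr 1
            · exact List.take_of_length_le (by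
                simp only [List.length_drop]
                omega)
            · show (wordNPow V (n+1)).take _ = _
              rw [show wordNPow V (n+1) = V ++ wordNPow V n from rfl,
                List.take_append_of_le_length (by omega)]
              congr 1
              simp only [List.length_drop]
              try omega
          refine ⟨[], (V.take i).drop k, ?_⟩
          rw [hweq, List.nil_append, List.append_assoc]
          congr 1
          rw [show V.take k = (V.take i).take k by rw [List.take_take, min_eq_left hki]]
          rw [List.take_append_drop]

end QG3

namespace QG3

variable {G : Type*} [Group G] {X : Type*} {f : X → G}

lemma shift_geodesic (hgen : ∀ g : G, ∃ w : List X, evalWord f w = g)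
    {V : List X} (hVmin : CyclicallyMinimal f V) (j : ℕ) (hj : j ≤ V.length) :
    wordLength f (evalWord f (V.drop j ++ V.take j)) = (V.drop j ++ V.take j).length := by
  have hlen : (V.drop j ++ V.take j).length = V.length := by
    simp only [List.length_append, List.length_drop, List.length_take]
    omega
  refine le_antisymm (wordLength_le _) ?_
  rw [hlen]
  have hconj : (evalWord f (V.take j))⁻¹ * evalWord f V * ((evalWord f (V.take j))⁻¹)⁻¹
      = evalWord f (V.drop j ++ V.take j) := by
    have hV : evalWord f V = evalWord f (V.take j) * evalWord f (V.drop j) := by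
      rw [← evalWord_append, List.take_append_drop]
    rw [hV, evalWord_append]
    group
  have := hVmin (evalWord f (V.take j))⁻¹
  rwa [hconj] at this

lemma subword_pow_geodesic (hgen : ∀ g : G, ∃ w : List X, evalWord f w = g)
    {V : List X} (hVmin : CyclicallyMinimal f V) {w : List X} {n : ℕ}
    (h : IsSubword w (wordNPow V n)) (hlen : w.length ≤ V.length) :
    wordLength f (evalWord f w) = w.length := by
  obtain ⟨j, hj, hsub⟩ := subword_npow_shift h hlen
  exact subword_of_geodesic hgen (shift_geodesic hgen hVmin j hj) hsub

end QG3

theorem stmt3 {G : Type*} [Group G] {X : Type*} [Fintype X] (f : X → G)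
    (hgen : ∀ g : G, ∃ w : List X, evalWord f w = g)
    (inv : X → X) (hinv : ∀ x : X, f (inv x) = (f x)⁻¹)
    (δ : ℕ) (hδ : 0 < δ) (hhyp : SlimTriangles (cayley f) δ)
    (V : List X) (hVmin : CyclicallyMinimal f V) (hVlen : 180 * δ ≤ V.length) :
    ∀ k : ℤ, IsQGWord f 4 (2520 * (δ : ℝ)) (wordZPow inv V k) := by
  haveI : DecidableEq G := Classical.decEq G
  intro k u hsubu
  have hloc : ∀ w, IsSubword w u → w.length ≤ 180 * δ →
      wordLength f (evalWord f w) = w.length := by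
    intro w hw hwl
    have hw' : IsSubword w (wordZPow inv V k) := QG3.isSubword_trans hw hsubu
    cases k with
    | ofNat n =>
      have hw2 : IsSubword w (wordNPow V n) := hw'
      exact QG3.subword_pow_geodesic hgen hVmin hw2 (by omega)
    | negSucc n =>
      have hw2 : IsSubword w (wordNPow (V.reverse.map inv) (n + 1)) := hw'
      rw [QG3.wordNPow_rev] at hw2
      obtain ⟨w₀, hw₀, rfl⟩ := QG3.subword_rev_map hw2
      have hlenrm : (w₀.reverse.map inv).length = w₀.length := by simp
      have hg := QG3.subword_pow_geodesic hgen hVmin hw₀ (by omega)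
      rw [QG3.evalWord_revInv hinv, QG3.wordLength_inv hinv hgen, hg, hlenrm]
  have hmain := QG3.local_to_global hgen hinv hδ hhyp u hloc
  have hcast : (u.length : ℝ) ≤ ((4 * wordLength f (evalWord f u) + 2520 * δ : ℕ) : ℝ) := by
    exact_mod_cast hmain
  push_cast at hcast
  linarith
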